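/- Let K be a field of characteristic 0 and C a neutral K-linear Tannakian category with fiber functor F : C → Vect_K. Let L/K be a finite Galois extension with group G, and let P be a rank-1 object of C_L with ᵍP ≅ P for all g ∈ G. Then P descends to C. -/
import Mathlib


open CategoryTheory CategoryTheory.MonoidalCategory

/-- **Rank-1 objects in a neutral Tannakian category descend.**
Let `K` be a field of characteristic `0`, `C` a neutral `K`-linear Tannakian category
with fiber functor to `Vect_K`, and `L/K` finite Galois with group `G`.  Formalized:
`C` (the base change `C_L`) is an `L`-linear monoidal category with a strict
semilinear `G`-action `ρC`, `Ind : C₀ ⥤ C` is induction and Galois descent holds in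
`C`; the base-changed fiber functor is an equivariant `L`-linear functor `Φ : C ⥤ D`
where `D` (playing the role of `Vect_L`) is an `L`-linear category with semilinear
`G`-action in which every object admits a descent datum.  If `P` is a rank-1
(invertible) object of `C_L` with `ᵍP ≅ P` for all `g ∈ G` (whence `End(P) ≅ L` and
`End(Φ P) ≅ L`), then `P` descends to `C`. -/
theorem rank_one_descends_neutral_tannakian
    (K L : Type*) [Field K] [CharZero K] [Field L] [Algebra K L] [IsGalois K L]
    [FiniteDimensional K L]
    (C D : Type*) [Category C] [Category D] [Preadditive C] [Preadditive D]
    [Linear L C] [Linear L D]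
    [MonoidalCategory C] [SymmetricCategory C]
    [MonoidalPreadditive C] [MonoidalLinear L C]
    (ρC : (L ≃ₐ[K] L) → C ⥤ C) (ρD : (L ≃ₐ[K] L) → D ⥤ D)
    (hmulC : ∀ g h : L ≃ₐ[K] L, ρC (g * h) = ρC h ⋙ ρC g)
    (hmulD : ∀ g h : L ≃ₐ[K] L, ρD (g * h) = ρD h ⋙ ρD g)
    (hsemiC : ∀ (g : L ≃ₐ[K] L) (X Y : C) (f : X ⟶ Y) (a : L),
      (ρC g).map (a • f) = g a • (ρC g).map f)
    (hsemiD : ∀ (g : L ≃ₐ[K] L) (X Y : D) (f : X ⟶ Y) (a : L),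
      (ρD g).map (a • f) = g a • (ρD g).map f)
    -- the base-changed fiber functor
    (Φ : C ⥤ D) [Φ.Additive] [Φ.Linear L] [Φ.Faithful]
    (hcomm : ∀ g : L ≃ₐ[K] L, ρC g ⋙ Φ = Φ ⋙ ρD g)
    -- every object of `D` (= `Vect_L`) descends
    (hDall : ∀ X : D, ∃ dat : ∀ g : L ≃ₐ[K] L, X ≅ (ρD g).obj X,
      ∀ g h : L ≃ₐ[K] L,
        (dat (g * h)).hom =
          (dat g).hom ≫ (ρD g).map (dat h).hom ≫
            eqToHom (show (ρD g).obj ((ρD h).obj X) = (ρD (g * h)).obj X by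
              rw [hmulD g h]; rfl))
    -- induction and Galois descent for `C`
    (C₀ : Type*) [Category C₀] (Ind : C₀ ⥤ C)
    (hdescC : ∀ X : C,
      (∃ N : C₀, Nonempty (Ind.obj N ≅ X)) ↔
      ∃ dat : ∀ g : L ≃ₐ[K] L, X ≅ (ρC g).obj X,
        ∀ g h : L ≃ₐ[K] L,
          (dat (g * h)).hom =
            (dat g).hom ≫ (ρC g).map (dat h).hom ≫
              eqToHom (show (ρC g).obj ((ρC h).obj X) = (ρC (g * h)).obj X by
                rw [hmulC g h]; rfl))
    -- `P` is a rank-1 (invertible) object, isomorphic to all its twists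
    (P Q : C) (einv : P ⊗ Q ≅ 𝟙_ C)
    (hEndP : Function.Bijective (fun a : L => a • (𝟙 P)))
    (hEndΦP : Function.Bijective (fun a : L => a • (𝟙 (Φ.obj P))))
    (htwist : ∀ g : L ≃ₐ[K] L, Nonempty (P ≅ (ρC g).obj P)) :
    ∃ N : C₀, Nonempty (Ind.obj N ≅ P) := by

  classical
  obtain ⟨dat, hdat⟩ := hDall (Φ.obj P)
  have Eob : ∀ (g : L ≃ₐ[K] L) (Y : C),
      Φ.obj ((ρC g).obj Y) = (ρD g).obj (Φ.obj Y) :=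
    fun g Y => Functor.congr_obj (hcomm g) Y
  -- choose isomorphisms P ≅ ᵍP
  let e : ∀ g : L ≃ₐ[K] L, P ≅ (ρC g).obj P := fun g => (htwist g).some
  -- compare with the descent datum downstairs
  let ψ : ∀ g : L ≃ₐ[K] L, Φ.obj P ≅ (ρD g).obj (Φ.obj P) :=
    fun g => Φ.mapIso (e g) ≪≫ eqToIso (Eob g P)
  have ha : ∀ g : L ≃ₐ[K] L, ∃ a : L, a • 𝟙 (Φ.obj P) = (dat g).hom ≫ (ψ g).inv :=
    fun g => hEndΦP.2 _
  have hb : ∀ g : L ≃ₐ[K] L, ∃ b : L, b • 𝟙 (Φ.obj P) = (ψ g).hom ≫ (dat g).inv :=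
    fun g => hEndΦP.2 _
  choose a haa using ha
  choose b hbb using hb
  have hab : ∀ g, a g * b g = 1 := by
    intro g
    have : ((dat g).hom ≫ (ψ g).inv) ≫ ((ψ g).hom ≫ (dat g).inv) = 𝟙 (Φ.obj P) := by
      simp
    rw [← haa g, ← hbb g, Linear.smul_comp, Category.id_comp, smul_smul] at this
    apply hEndΦP.1
    show (a g * b g) • 𝟙 (Φ.obj P) = (1 : L) • 𝟙 (Φ.obj P)
    rw [one_smul, this]
  have hba : ∀ g, b g * a g = 1 := fun g => by rw [mul_comm]; exact hab g
  -- corrected descent datum in C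
  let dat' : ∀ g : L ≃ₐ[K] L, P ≅ (ρC g).obj P := fun g =>
    { hom := a g • (e g).hom
      inv := b g • (e g).inv
      hom_inv_id := by
        rw [Linear.smul_comp, Linear.comp_smul, smul_smul, hab g, one_smul]
        simp
      inv_hom_id := by
        rw [Linear.smul_comp, Linear.comp_smul, smul_smul, hba g, one_smul]
        simp }
  have hkey : ∀ g : L ≃ₐ[K] L,
      Φ.map (dat' g).hom ≫ eqToHom (Eob g P) = (dat g).hom := by
    intro g
    have hd : (dat g).hom = a g • (ψ g).hom := by
      have : (dat g).hom = ((dat g).hom ≫ (ψ g).inv) ≫ (ψ g).hom := by simp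
      rw [this, ← haa g, Linear.smul_comp, Category.id_comp]
    show Φ.map (a g • (e g).hom) ≫ eqToHom (Eob g P) = (dat g).hom
    rw [Φ.map_smul, Linear.smul_comp, hd]
    rfl
  have hkey' : ∀ g : L ≃ₐ[K] L,
      Φ.map (dat' g).hom = (dat g).hom ≫ eqToHom (Eob g P).symm := by
    intro g
    rw [← hkey g]
    simp
  apply (hdescC P).mpr
  refine ⟨dat', ?_⟩
  intro g h
  apply Φ.map_injective
  apply (cancel_mono (eqToHom (Eob (g * h) P))).mp
  rw [hkey (g * h)]
  rw [Φ.map_comp, Φ.map_comp]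
  have hswap : Φ.map ((ρC g).map (dat' h).hom) =
      eqToHom (Eob g P) ≫ (ρD g).map (Φ.map (dat' h).hom) ≫
        eqToHom (Eob g ((ρC h).obj P)).symm := by
    have h2 := Functor.congr_hom (hcomm g) (dat' h).hom
    simpa using h2
  rw [hswap, hdat g h, hkey' g, hkey' h]
  simp [eqToHom_map]
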